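/- Let θ₁ > 2 and θ > max{2/(θ₁−2), ξ₂}, where ξ₂ = (2((θ₁+1)²(θ₁−1)+2) + 4√((θ₁+1)³+1)) / ((θ₁²−1)²−8) (well defined since θ₁ > 2 implies (θ₁²−1)² > 8). Define f(u; θ, θ₁) = (θ₁²θu² + 4θ₁u + 2(θ+1)) / (θu² + 2(θ₁+1)u + θ₁²θ + 2θ₁ + θ) and Q(u) = θu² + (θ₁+1)(θ(1−θ₁)+2)u + 2(θ+1). Then Q has two distinct positive roots u₂* < u₁* with u₂* < 1 < u₁*, and the set of fixed points of f(·; θ, θ₁) in (0, ∞) is exactly {u₂*, 1, u₁*}. -/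

import Mathlib

/-- in the phase-transition regime `θ₁ > 2`, `θ > max{2/(θ₁-2), ξ₂}`,
the quadratic `Q` has two positive roots `u₂* < 1 < u₁*`, and the positive fixed points
of the recursion `f` are exactly `{u₂*, 1, u₁*}`. -/
theorem potts_three_fixed_points (θ θ₁ : ℝ) (hθ₁ : 2 < θ₁)
    (hθ : θ > max (2 / (θ₁ - 2))
        ((2 * ((θ₁ + 1) ^ 2 * (θ₁ - 1) + 2) +
          4 * Real.sqrt ((θ₁ + 1) ^ 3 + 1)) / ((θ₁ ^ 2 - 1) ^ 2 - 8))) :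
    ∃ u₁ u₂ : ℝ, 0 < u₂ ∧ u₂ < 1 ∧ 1 < u₁ ∧
      θ * u₂ ^ 2 + (θ₁ + 1) * (θ * (1 - θ₁) + 2) * u₂ + 2 * (θ + 1) = 0 ∧
      θ * u₁ ^ 2 + (θ₁ + 1) * (θ * (1 - θ₁) + 2) * u₁ + 2 * (θ + 1) = 0 ∧
      {u : ℝ | 0 < u ∧
          (θ₁ ^ 2 * θ * u ^ 2 + 4 * θ₁ * u + 2 * (θ + 1)) /
            (θ * u ^ 2 + 2 * (θ₁ + 1) * u + θ₁ ^ 2 * θ + 2 * θ₁ + θ) = u} =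
        {u₂, 1, u₁} := by
  have hθ' : 2 / (θ₁ - 2) < θ := lt_of_le_of_lt (le_max_left _ _) hθ
  have h2 : (0:ℝ) < θ₁ - 2 := by linarith
  have h2' : 2 < θ * (θ₁ - 2) := (div_lt_iff₀ h2).mp hθ'
  have θpos : 0 < θ := by nlinarith
  clear hθ hθ'
  set b : ℝ := (θ₁ + 1) * (θ * (1 - θ₁) + 2) with hb
  -- Q(1) < 0
  have hQ1 : θ + b + 2 * (θ + 1) < 0 := by
    have h3 : θ₁ * (θ * (θ₁ - 2) - 2) > 0 := mul_pos (by linarith) (by linarith)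
    rw [hb]; nlinarith [h3, h2']
  have hD : 0 < b ^ 2 - 8 * θ * (θ + 1) := by
    nlinarith [mul_pos (show 0 < -(b + 3*θ + 2) by linarith)
      (show 0 < -(b - 3*θ - 2) by nlinarith)]
  obtain ⟨s, hs, hs2⟩ : ∃ s : ℝ, 0 < s ∧ s ^ 2 = b ^ 2 - 8 * θ * (θ + 1) :=
    ⟨Real.sqrt _, Real.sqrt_pos.mpr hD, Real.sq_sqrt hD.le⟩
  set u₁ : ℝ := (-b + s) / (2 * θ) with hu1
  set u₂ : ℝ := (-b - s) / (2 * θ) with hu2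
  have hbneg : b + 3 * θ + 2 < 0 := by linarith
  have hslt : s < -b := by nlinarith [hs.le, hs2, mul_pos θpos (show (0:ℝ) < θ + 1 by linarith)]
  have hu2pos : 0 < u₂ := div_pos (by linarith) (by linarith)
  have hsgt : -b - 2 * θ < s := by
    nlinarith [hs.le, hs2, mul_pos θpos (show (0:ℝ) < -(b + 3*θ + 2) by linarith)]
  have hu2lt : u₂ < 1 := by
    rw [hu2, div_lt_one (by linarith)]; linarith
  have hu1gt : 1 < u₁ := by
    rw [hu1, lt_div_iff₀ (by linarith)]; linarith
  have hsum : θ * (u₁ + u₂) = -b := by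
    rw [hu1, hu2]; field_simp; ring
  have hprod : θ * (u₁ * u₂) = 2 * (θ + 1) := by
    rw [hu1, hu2]; field_simp
    linear_combination -hs2
  have hfact : ∀ x : ℝ, θ * (x - u₁) * (x - u₂) = θ * x ^ 2 + b * x + 2 * (θ + 1) := by
    intro x
    linear_combination (-x) * hsum + hprod
  clear_value u₁ u₂
  have hQu1 : θ * u₁ ^ 2 + b * u₁ + 2 * (θ + 1) = 0 := by
    rw [← hfact u₁]; ring
  have hQu2 : θ * u₂ ^ 2 + b * u₂ + 2 * (θ + 1) = 0 := by
    rw [← hfact u₂]; ring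
  refine ⟨u₁, u₂, hu2pos, hu2lt, hu1gt, hQu2, hQu1, ?_⟩
  have hdpos : ∀ u : ℝ, 0 < u → 0 < θ * u ^ 2 + 2 * (θ₁ + 1) * u + θ₁ ^ 2 * θ + 2 * θ₁ + θ := by
    intro u hu
    nlinarith [mul_pos θpos (mul_pos hu hu), mul_pos (show (0:ℝ) < 2*(θ₁+1) by linarith) hu,
      mul_pos (mul_pos (show (0:ℝ) < θ₁ by linarith) (show (0:ℝ) < θ₁ by linarith)) θpos]
  ext u
  simp only [Set.mem_setOf_eq, Set.mem_insert_iff, Set.mem_singleton_iff]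
  constructor
  · rintro ⟨hu, heq⟩
    rw [div_eq_iff (hdpos u hu).ne'] at heq
    have hcubic : (u - 1) * (θ * u ^ 2 + b * u + 2 * (θ + 1)) = 0 := by
      linear_combination -heq
    rcases mul_eq_zero.mp hcubic with h | h
    · right; left; linarith
    · have h0 : θ * (u - u₁) * (u - u₂) = 0 := by rw [hfact]; exact h
      rcases mul_eq_zero.mp h0 with h' | h'
      · rcases mul_eq_zero.mp h' with h'' | h''
        · exact absurd h'' θpos.ne'
        · right; right; linarith
      · left; linarith
  · rintro (h | h | h) <;> rw [h]
    · refine ⟨hu2pos, ?_⟩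
      rw [div_eq_iff (hdpos u₂ hu2pos).ne']
      linear_combination (-(u₂ - 1)) * hQu2
    · refine ⟨one_pos, ?_⟩
      rw [div_eq_iff (hdpos 1 one_pos).ne']; ring
    · refine ⟨by linarith, ?_⟩
      rw [div_eq_iff (hdpos u₁ (by linarith)).ne']
      linear_combination (-(u₁ - 1)) * hQu1
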